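/- For all rooted trees T1, T2: if T1 ≇ T2 then δ_{T1} × δ_{T2} = Σ_T a(T1,T2;T)·δ_T + δ_{T1⊔T2}, and δ_{T1} × δ_{T1} = Σ_T a(T1,T1;T)·δ_T + 2·δ_{T1⊔T1}, where the sums are over isomorphism classes of rooted trees T and T1⊔T2 denotes the two-tree forest. Consequently, for all rooted trees T1, T2, the commutator in H satisfies δ_{T1} × δ_{T2} − δ_{T2} × δ_{T1} = Σ_T (a(T1,T2;T) − a(T2,T1;T))·δ_T. -/

import Mathlib

open scoped Classical

/-- Concrete (labeled) rooted trees: a root with a list of subtrees. -/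
inductive RTree : Type
  | node : List RTree → RTree

/-- Shapes of admissible cuts: at each tree, either the full cut
(everything, including the root, goes to the pruned part `P`), or a choice of
an admissible cut of each child subtree.  A `full` occurring strictly inside
corresponds to cutting the edge above that vertex. -/
inductive CutShape : Type
  | full
  | branch : List CutShape → CutShape

namespace CK

/-- Number of vertices of a forest. -/
def sizeL : List RTree → ℕ
  | [] => 0
  | .node l :: ts => 1 + sizeL l + sizeL ts

/-- All admissible cuts of a forest (a choice of admissible cut of each tree). -/
def cutsF : List RTree → List (List CutShape)
  | [] => [[]]
  | .node l :: ts =>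
      (CutShape.full :: (cutsF l).map CutShape.branch).flatMap
        fun c => (cutsF ts).map (c :: ·)

/-- The root part `R_C(F)` of a cut. -/
def Rcut : List RTree → List CutShape → List RTree
  | [], _ => []
  | _ :: _, [] => []
  | .node _ :: ts, .full :: cs => Rcut ts cs
  | .node l :: ts, .branch ds :: cs => RTree.node (Rcut l ds) :: Rcut ts cs

/-- The pruned part `P_C(F)` of a cut. -/
def Pcut : List RTree → List CutShape → List RTree
  | [], _ => []
  | _ :: _, [] => []
  | .node l :: ts, .full :: cs => RTree.node l :: Pcut ts cs
  | .node l :: ts, .branch ds :: cs => Pcut l ds ++ Pcut ts cs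

/-- Number of `full`s occurring in a cut. -/
def fullsL : List CutShape → ℕ
  | [] => 0
  | .full :: cs => 1 + fullsL cs
  | .branch ds :: cs => fullsL ds + fullsL cs

/-- A list of concrete forests containing (representatives of) every forest
with at most `n` vertices. -/
def forestsUpTo : ℕ → List (List RTree)
  | 0 => [[]]
  | n+1 => [] :: (forestsUpTo n).flatMap fun l => (forestsUpTo n).map fun F => RTree.node l :: F

/-- Isomorphism of rooted trees (non-planar): a root-preserving bijection, i.e.
the lists of subtrees agree up to permutation and isomorphism. -/
inductive Iso : RTree → RTree → Prop
  | node {l₁ l l₂ : List RTree} : List.Forall₂ Iso l₁ l → l.Perm l₂ → Iso (.node l₁) (.node l₂)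

/-- Isomorphism classes of rooted trees. -/
abbrev TreeClass : Type := Quot Iso

/-- Isomorphism classes of rooted forests = multisets of tree classes.
The empty forest is `0`. -/
abbrev ForestClass : Type := Multiset TreeClass

/-- Isomorphism class of a tree. -/
def clT (t : RTree) : TreeClass := Quot.mk _ t

/-- Isomorphism class of a forest. -/
def clF (F : List RTree) : ForestClass := (F.map clT : List TreeClass)

/-- A concrete representative of a forest class. -/
noncomputable def repF (M : ForestClass) : List RTree := M.toList.map Quot.out

/-- A concrete representative of a tree class. -/
noncomputable def repT (T : TreeClass) : RTree := T.out

/-- Number of vertices of a forest class. -/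
noncomputable def sizeC (M : ForestClass) : ℕ := sizeL (repF M)

/-- Number of vertices of a tree class. -/
noncomputable def sizeT (T : TreeClass) : ℕ := sizeL [repT T]

/-- The Hall algebra `H`: finitely supported ℚ-valued functions on
isomorphism classes of rooted forests, with basis the delta functions. -/
abbrev H : Type := ForestClass →₀ ℚ

/-- The basis element `δ_A` of `H`. -/
noncomputable def delta (A : ForestClass) : H := Finsupp.single A 1

/-- `n(A,B;M)`: the number of admissible cuts `C` of `M` with
`P_C(M) ≅ A` and `R_C(M) ≅ B`. -/
noncomputable def nCuts (A B M : ForestClass) : ℕ :=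
  (cutsF (repF M)).countP fun c =>
    decide (clF (Pcut (repF M) c) = A ∧ clF (Rcut (repF M) c) = B)

/-- A finite set of forest classes containing all classes with at most `n`
vertices. -/
noncomputable def forestCand (n : ℕ) : Finset ForestClass :=
  ((forestsUpTo n).map clF).toFinset

/-- A finite set of tree classes containing all classes with at most `n+1`
vertices. -/
noncomputable def treeCand (n : ℕ) : Finset TreeClass :=
  ((forestsUpTo n).map fun F => clT (RTree.node F)).toFinset

/-- The Hall product on basis elements: `δ_A × δ_B = Σ_M n(A,B;M)·δ_M`
(every `M` with `n(A,B;M) ≠ 0` has exactly `sizeC A + sizeC B` vertices). -/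
noncomputable def mulBasis (A B : ForestClass) : H :=
  ∑ M ∈ forestCand (sizeC A + sizeC B), (nCuts A B M : ℚ) • delta M

/-- The Hall product on `H`, extended bilinearly from basis elements. -/
noncomputable def hmul (f g : H) : H :=
  f.sum fun A a => g.sum fun B b => (a * b) • mulBasis A B

/-- The Connes-Kreimer Lie algebra `n_T` (as a vector space): the span of
isomorphism classes of rooted trees. -/
abbrev nT : Type := TreeClass →₀ ℚ

/-- The basis element of `n_T` corresponding to a rooted tree `T`. -/
noncomputable def tau (T : TreeClass) : nT := Finsupp.single T 1

/-- `a(T₁,T₂;T)`: the number of edges `e` of `T` such that the single-edge cut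
at `e` has pruned part `≅ T₁` and root part `≅ T₂`. -/
noncomputable def aCount (T₁ T₂ T : TreeClass) : ℕ :=
  (cutsF [repT T]).countP fun c =>
    decide (fullsL c = 1 ∧ clF (Pcut [repT T] c) = ({T₁} : Multiset TreeClass)
      ∧ clF (Rcut [repT T] c) = ({T₂} : Multiset TreeClass))

/-- The grafting (pre-Lie) product on basis elements:
`T₁ * T₂ = Σ_T a(T₁,T₂;T)·T`. -/
noncomputable def graftBasis (T₁ T₂ : TreeClass) : nT :=
  ∑ T ∈ treeCand (sizeT T₁ + sizeT T₂), (aCount T₁ T₂ T : ℚ) • tau T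

/-- The grafting (pre-Lie) product on `n_T`, extended bilinearly. -/
noncomputable def graft (x y : nT) : nT :=
  x.sum fun T₁ a => y.sum fun T₂ b => (a * b) • graftBasis T₁ T₂

/-- The Connes-Kreimer bracket `[x,y] = x*y - y*x` on `n_T`. -/
noncomputable def ckBracket (x y : nT) : nT := graft x y - graft y x

/-- `Ẽ_A δ_B = Σ_C δ_{R_C(B)}`, the sum over admissible cuts `C` of `B` with
`P_C(B) ≅ A`. -/
noncomputable def elimBasis (A B : ForestClass) : H :=
  (((cutsF (repF B)).filter fun c => decide (clF (Pcut (repF B) c) = A)).map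
    fun c => delta (clF (Rcut (repF B) c))).sum

/-- The elimination operator `E_A` (here on `H ≅ H*`, identifying `φ_B` with
`δ_B`). -/
noncomputable def elim (A : ForestClass) : H →ₗ[ℚ] H :=
  Finsupp.lsum ℚ fun B => LinearMap.toSpanSingleton ℚ H (elimBasis A B)

/-- `Ẽ^top_A δ_B = Σ_C δ_{P_C(B)}`, the sum over admissible cuts `C` of `B`
with `R_C(B) ≅ A`. -/
noncomputable def topElimBasis (A B : ForestClass) : H :=
  (((cutsF (repF B)).filter fun c => decide (clF (Rcut (repF B) c) = A)).map
    fun c => delta (clF (Pcut (repF B) c))).sum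

/-- The top-elimination operator `E^top_A`. -/
noncomputable def topElim (A : ForestClass) : H →ₗ[ℚ] H :=
  Finsupp.lsum ℚ fun B => LinearMap.toSpanSingleton ℚ H (topElimBasis A B)

/-- `H ⊗ H`, realized as finitely supported functions on pairs of classes. -/
abbrev H2 : Type := (ForestClass × ForestClass) →₀ ℚ

/-- `Δ(δ_M) = Σ δ_A ⊗ δ_B`, the sum over ordered pairs `(A,B)` of classes with
`A ⊔ B ≅ M`. -/
noncomputable def deltaBasis (M : ForestClass) : H2 :=
  ∑ A ∈ M.powerset.toFinset, Finsupp.single (A, M - A) 1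

/-- The coproduct `Δ : H → H ⊗ H`. -/
noncomputable def coprod : H →ₗ[ℚ] H2 :=
  Finsupp.lsum ℚ fun M => LinearMap.toSpanSingleton ℚ H2 (deltaBasis M)

/-! ### Auxiliary development -/

/-- Size of a single tree. -/
def size1 : RTree → ℕ | .node l => 1 + sizeL l

lemma sizeL_cons (t : RTree) (ts : List RTree) :
    sizeL (t :: ts) = size1 t + sizeL ts := by
  cases t; simp [sizeL, size1]

lemma sizeL_eq_sum : ∀ F : List RTree, sizeL F = (F.map size1).sum
  | [] => by simp [sizeL]
  | t :: ts => by rw [sizeL_cons, List.map_cons, List.sum_cons, sizeL_eq_sum ts]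

lemma one_le_size1 (t : RTree) : 1 ≤ size1 t := by
  cases t; simp [size1]

lemma size1_le_sizeL {x : RTree} {F : List RTree} (h : x ∈ F) : size1 x ≤ sizeL F := by
  induction F with
  | nil => cases h
  | cons t ts ih =>
    rw [sizeL_cons]
    rcases List.mem_cons.1 h with rfl | h'
    · omega
    · have := ih h'; omega

lemma sizeL_single (t : RTree) : sizeL [t] = size1 t := by
  rw [sizeL_cons]; simp [sizeL]

lemma sizeL_append : ∀ A B : List RTree, sizeL (A ++ B) = sizeL A + sizeL B := by
  intro A B
  induction A with
  | nil => simp [sizeL]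
  | cons t ts ih => rw [List.cons_append, sizeL_cons, sizeL_cons, ih]; omega

lemma mem_cutsF_cons {l ts : List RTree} {c : List CutShape} :
    c ∈ cutsF (.node l :: ts) ↔
      (∃ cs ∈ cutsF ts, c = .full :: cs) ∨
      (∃ ds ∈ cutsF l, ∃ cs ∈ cutsF ts, c = .branch ds :: cs) := by
  simp only [cutsF, List.mem_flatMap, List.mem_cons, List.mem_map]
  constructor
  · rintro ⟨c₁, (rfl | ⟨ds, hds, rfl⟩), cs, hcs, rfl⟩
    · exact .inl ⟨cs, hcs, rfl⟩
    · exact .inr ⟨ds, hds, cs, hcs, rfl⟩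
  · rintro (⟨cs, hcs, rfl⟩ | ⟨ds, hds, cs, hcs, rfl⟩)
    · exact ⟨.full, .inl rfl, cs, hcs, rfl⟩
    · exact ⟨.branch ds, .inr ⟨ds, hds, rfl⟩, cs, hcs, rfl⟩

/-- Number of top-level fulls in a cut. -/
def tfL : List CutShape → ℕ
  | [] => 0
  | .full :: cs => 1 + tfL cs
  | .branch _ :: cs => tfL cs

lemma tfL_le_fullsL : ∀ c, tfL c ≤ fullsL c := by
  intro c
  induction c using fullsL.induct with
  | case1 => simp [tfL, fullsL]
  | case2 cs ih => simp [tfL, fullsL]; omega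
  | case3 ds cs ih1 ih2 => simp [tfL, fullsL]; omega

lemma cut_facts : ∀ (F : List RTree) (c : List CutShape), c ∈ cutsF F →
    (Pcut F c).length = fullsL c ∧
    (Rcut F c).length + tfL c = F.length ∧
    sizeL (Pcut F c) + sizeL (Rcut F c) = sizeL F := by
  intro F
  induction F using cutsF.induct with
  | case1 =>
    intro c hc
    simp only [cutsF, List.mem_singleton] at hc
    subst hc
    simp [Pcut, Rcut, fullsL, tfL, sizeL]
  | case2 l ts ihts ihl =>
    intro c hc
    rcases mem_cutsF_cons.1 hc with ⟨cs, hcs, rfl⟩ | ⟨ds, hds, cs, hcs, rfl⟩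
    · obtain ⟨h1, h2, h3⟩ := ihts cs hcs
      simp only [Pcut, Rcut, fullsL, tfL, List.length_cons, sizeL_cons, size1]
      omega
    · obtain ⟨h1, h2, h3⟩ := ihts cs hcs
      obtain ⟨g1, g2, g3⟩ := ihl ds hds
      simp only [Pcut, Rcut, fullsL, tfL, List.length_cons, List.length_append,
        sizeL_cons, sizeL_append, size1]
      omega

lemma length_of_mem_cutsF {F : List RTree} {c : List CutShape} (h : c ∈ cutsF F) :
    c.length = F.length := by
  induction F using cutsF.induct generalizing c with
  | case1 => simp only [cutsF, List.mem_singleton] at h; subst h; rfl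
  | case2 l ts ihts ihl =>
    rcases mem_cutsF_cons.1 h with ⟨cs, hcs, rfl⟩ | ⟨ds, hds, cs, hcs, rfl⟩ <;>
      simp [ihts hcs]

/-- The zero-full (empty) cut of a forest. -/
def zcF : List RTree → List CutShape
  | [] => []
  | .node l :: ts => .branch (zcF l) :: zcF ts

/-- The zero-full cut of a tree. -/
def zc1 : RTree → CutShape
  | .node l => .branch (zcF l)

lemma zcF_cons (t : RTree) (ts : List RTree) : zcF (t :: ts) = zc1 t :: zcF ts := by
  cases t; simp [zcF, zc1]

lemma zcF_mem : ∀ F, zcF F ∈ cutsF F := by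
  intro F
  induction F using zcF.induct with
  | case1 => simp [zcF, cutsF]
  | case2 l ts ih1 ih2 =>
    exact mem_cutsF_cons.2 (.inr ⟨zcF l, ih1, zcF ts, ih2, by simp [zcF]⟩)

lemma fullsL_zcF : ∀ F, fullsL (zcF F) = 0 := by
  intro F
  induction F using zcF.induct with
  | case1 => simp [zcF, fullsL]
  | case2 l ts ih1 ih2 => simp [zcF, fullsL, ih1, ih2]

lemma Rcut_zcF : ∀ F, Rcut F (zcF F) = F ∧ Pcut F (zcF F) = [] := by
  intro F
  induction F using zcF.induct with
  | case1 => simp [zcF, Rcut, Pcut]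
  | case2 l ts ih1 ih2 =>
    simp [zcF, Rcut, Pcut, ih1.1, ih1.2, ih2.1, ih2.2]

lemma eq_zcF : ∀ (F : List RTree) (c : List CutShape), c ∈ cutsF F → fullsL c = 0 → c = zcF F := by
  intro F
  induction F using cutsF.induct with
  | case1 =>
    intro c hc _
    simp only [cutsF, List.mem_singleton] at hc; subst hc; simp [zcF]
  | case2 l ts ihts ihl =>
    intro c hc h0
    rcases mem_cutsF_cons.1 hc with ⟨cs, hcs, rfl⟩ | ⟨ds, hds, cs, hcs, rfl⟩
    · simp [fullsL] at h0
    · simp only [fullsL] at h0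
      rw [zcF, ihl ds hds (by omega), ihts cs hcs (by omega)]
lemma cutsF_nodup : ∀ F : List RTree, (cutsF F).Nodup := by
  intro F
  induction F using cutsF.induct with
  | case1 => simp [cutsF]
  | case2 l ts ihts ihl =>
    rw [cutsF, List.nodup_flatMap]
    constructor
    · intro x _
      exact ihts.map (fun a b h => by injection h)
    · have hnd : (CutShape.full :: (cutsF l).map CutShape.branch).Nodup := by
        refine List.nodup_cons.2 ⟨?_, ihl.map (fun a b h => by injection h)⟩
        intro h
        obtain ⟨d, _, hd⟩ := List.mem_map.1 h
        exact CutShape.noConfusion hd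
      refine hnd.imp ?_
      intro a b hab
      intro x hx hy
      obtain ⟨cs, _, rfl⟩ := List.mem_map.1 hx
      obtain ⟨cs', _, h⟩ := List.mem_map.1 hy
      injection h with h1 h2
      exact hab h1.symm

lemma countP_eq_one_aux {α : Type*} {p : α → Bool} {x : α} :
    ∀ {l : List α}, l.Nodup → x ∈ l → (∀ a ∈ l, p a = true ↔ a = x) → l.countP p = 1 := by
  intro l
  induction l with
  | nil => intro _ hx; cases hx
  | cons b l ih =>
    intro hn hx h
    rw [List.countP_cons]
    rcases List.mem_cons.1 hx with rfl | hx'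
    · have h0 : l.countP p = 0 := List.countP_eq_zero.2 fun a ha hpa =>
        (List.nodup_cons.1 hn).1 (((h a (List.mem_cons_of_mem _ ha)).1 hpa) ▸ ha)
      have hpx : p x = true := (h x (List.mem_cons_self)).2 rfl
      simp [h0, hpx]
    · have hbx : b ≠ x := fun e => (List.nodup_cons.1 hn).1 (e ▸ hx')
      have : ¬ p b = true := fun hpb => hbx ((h b (List.mem_cons_self)).1 hpb)
      have h1 := ih (List.nodup_cons.1 hn).2 hx' (fun a ha => h a (List.mem_cons_of_mem _ ha))
      simp [h1, this]

lemma countP_or_split {α : Type*} {x y : α} (hxy : x ≠ y) :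
    ∀ l : List α, (l.countP fun a => decide (a = x) || decide (a = y))
      = (l.countP fun a => decide (a = x)) + (l.countP fun a => decide (a = y)) := by
  intro l
  induction l with
  | nil => simp
  | cons b l ih =>
    simp only [List.countP_cons, ih, Bool.or_eq_true, decide_eq_true_eq]
    rcases eq_or_ne b x with rfl | hx
    · simp [hxy]
      try omega
    · rcases eq_or_ne b y with rfl | hy
      · simp [hx]
        try omega
      · simp [hx, hy]
        try omega

lemma countP_eq_two_aux {α : Type*} {p : α → Bool} {x y : α} {l : List α}
    (hn : l.Nodup) (hx : x ∈ l) (hy : y ∈ l) (hxy : x ≠ y)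
    (h : ∀ a ∈ l, p a = true ↔ (a = x ∨ a = y)) : l.countP p = 2 := by
  have h1 : l.countP p = l.countP fun a => decide (a = x) || decide (a = y) := by
    apply List.countP_congr
    intro a ha
    simp only [Bool.or_eq_true, decide_eq_true_eq]
    exact h a ha
  rw [h1, countP_or_split hxy l,
    countP_eq_one_aux hn hx (by simp), countP_eq_one_aux hn hy (by simp)]

/-! ### Classes -/

lemma clT_out (T : TreeClass) : clT (Quot.out T) = T := Quot.out_eq T

lemma clF_repF (M : ForestClass) : clF (repF M) = M := by
  unfold clF repF
  rw [List.map_map]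
  have he : (clT ∘ Quot.out) = (id : TreeClass → TreeClass) := funext fun x => clT_out x
  rw [he, List.map_id, Multiset.coe_toList]

lemma card_clF (F : List RTree) : Multiset.card (clF F) = F.length := by
  simp [clF]

lemma length_repF (M : ForestClass) : (repF M).length = Multiset.card M := by
  simp [repF]

lemma clF_single (t : RTree) : clF [t] = ({clT t} : Multiset TreeClass) := by
  simp [clF]

lemma clF_pair (s s' : RTree) :
    clF [s, s'] = ({clT s} : Multiset TreeClass) + {clT s'} := by
  simp [clF]
  rfl

lemma clF_eq_singleton {F : List RTree} {T : TreeClass}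
    (h : clF F = ({T} : Multiset TreeClass)) : ∃ t, F = [t] ∧ clT t = T := by
  have hl : F.length = 1 := by
    have := congrArg Multiset.card h
    rwa [card_clF, Multiset.card_singleton] at this
  obtain ⟨t, rfl⟩ := List.length_eq_one_iff.1 hl
  refine ⟨t, rfl, ?_⟩
  rw [clF_single] at h
  exact Multiset.singleton_inj.1 h

lemma repF_singleton (T : TreeClass) : repF {T} = [repT T] := by
  unfold repF repT
  rw [Multiset.toList_singleton]
  rfl
lemma sizeL_eq_of_forall₂ : ∀ {l₁ l₂ : List RTree}, List.Forall₂ Iso l₁ l₂ →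
    (∀ x ∈ l₁, ∀ y, Iso x y → size1 x = size1 y) → sizeL l₁ = sizeL l₂ := by
  intro l₁ l₂ h
  induction h with
  | nil => intro _; rfl
  | @cons a b l₁' l₂' hab _ ih =>
    intro hm
    rw [sizeL_cons, sizeL_cons, hm a (List.mem_cons_self) b hab,
      ih fun x hx => hm x (List.mem_cons_of_mem _ hx)]

lemma size1_iso : ∀ (n : ℕ) (t t' : RTree), size1 t ≤ n → Iso t t' → size1 t = size1 t' := by
  intro n
  induction n with
  | zero =>
    intro t t' h _
    have := one_le_size1 t; omega
  | succ n ih =>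
    rintro ⟨l₁⟩ t' hle hiso
    cases hiso with
    | @node _ l l₂ h₁ h₂ =>
      have hb : sizeL l₁ ≤ n := by
        have : size1 (RTree.node l₁) = 1 + sizeL l₁ := by simp [size1]
        omega
      have e1 : sizeL l₁ = sizeL l :=
        sizeL_eq_of_forall₂ h₁ fun x hx y hy =>
          ih x y (le_trans (size1_le_sizeL hx) hb) hy
      have e2 : sizeL l = sizeL l₂ := by
        rw [sizeL_eq_sum, sizeL_eq_sum]
        exact (h₂.map size1).sum_eq
      simp [size1, e1, e2]

/-- Size descends to tree classes. -/
noncomputable def sizeQ : TreeClass → ℕ :=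
  Quot.lift size1 fun a b h => size1_iso (size1 a) a b le_rfl h

lemma sizeQ_clT (t : RTree) : sizeQ (clT t) = size1 t := rfl

lemma sizeQ_out (T : TreeClass) : sizeQ T = size1 (Quot.out T) := by
  conv_lhs => rw [← clT_out T]
  rfl

lemma sizeT_eq (T : TreeClass) : sizeT T = sizeQ T := by
  unfold sizeT repT
  rw [sizeL_single, sizeQ_out]

lemma sizeC_eq (M : ForestClass) : sizeC M = (M.map sizeQ).sum := by
  unfold sizeC repF
  rw [sizeL_eq_sum, List.map_map]
  have h1 : (size1 ∘ Quot.out : TreeClass → ℕ) = sizeQ := funext fun x => (sizeQ_out x).symm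
  rw [h1]
  conv_rhs => rw [← Multiset.coe_toList M]
  rw [Multiset.map_coe, Multiset.sum_coe]

lemma sizeC_clF (F : List RTree) : sizeC (clF F) = sizeL F := by
  rw [sizeC_eq, clF, Multiset.map_coe, List.map_map, Multiset.sum_coe, sizeL_eq_sum]
  rfl

lemma sizeC_add (A B : ForestClass) : sizeC (A + B) = sizeC A + sizeC B := by
  simp [sizeC_eq]

lemma sizeC_singleton (T : TreeClass) : sizeC ({T} : ForestClass) = sizeT T := by
  rw [sizeC_eq, sizeT_eq, Multiset.map_singleton, Multiset.sum_singleton]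

lemma one_le_sizeT (T : TreeClass) : 1 ≤ sizeT T := by
  rw [sizeT_eq, sizeQ_out]
  exact one_le_size1 _

/-! ### Candidate sets -/

lemma mem_forestsUpTo : ∀ (n : ℕ) (F : List RTree), sizeL F ≤ n → F ∈ forestsUpTo n := by
  intro n
  induction n with
  | zero =>
    intro F h
    match F with
    | [] => simp [forestsUpTo]
    | .node l :: ts => simp [sizeL] at h
  | succ n ih =>
    intro F h
    match F with
    | [] => simp [forestsUpTo]
    | .node l :: ts =>
      simp only [forestsUpTo, List.mem_cons, List.mem_flatMap, List.mem_map]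
      have h' : 1 + sizeL l + sizeL ts ≤ n + 1 := by rw [sizeL] at h; exact h
      exact .inr ⟨l, ih l (by omega), ts, ih ts (by omega), rfl⟩

lemma mem_forestCand {M : ForestClass} {n : ℕ} (h : sizeC M ≤ n) : M ∈ forestCand n := by
  unfold forestCand
  rw [List.mem_toFinset, List.mem_map]
  exact ⟨repF M, mem_forestsUpTo n _ h, clF_repF M⟩

lemma mem_treeCand {T : TreeClass} {n : ℕ} (h : sizeT T ≤ n + 1) : T ∈ treeCand n := by
  unfold treeCand
  rw [List.mem_toFinset, List.mem_map]
  obtain ⟨l, hl⟩ : ∃ l, Quot.out T = RTree.node l := by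
    cases h' : Quot.out T with
    | node l => exact ⟨l, rfl⟩
  refine ⟨l, mem_forestsUpTo n l ?_, ?_⟩
  · have : sizeT T = 1 + sizeL l := by
      rw [sizeT_eq, sizeQ_out, hl]; simp [size1]
    omega
  · rw [← hl, clT_out]
/-! ### Cut analysis for one and two trees -/

lemma cutsF_single_mem {t : RTree} {c : List CutShape} (hc : c ∈ cutsF [t]) :
    ∃ c₁, c = [c₁] := by
  have := length_of_mem_cutsF hc
  simp at this
  exact List.length_eq_one_iff.1 this

lemma Pcut_full (l : List RTree) :
    Pcut [RTree.node l] [CutShape.full] = [RTree.node l] ∧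
      Rcut [RTree.node l] [CutShape.full] = [] := by
  constructor <;> simp [Pcut, Rcut]

lemma pred_pair {s s' : RTree} {T₁ T₂ : TreeClass} {c : List CutShape}
    (hc : c ∈ cutsF [s, s']) :
    (clF (Pcut [s, s'] c) = ({T₁} : Multiset TreeClass) ∧
      clF (Rcut [s, s'] c) = ({T₂} : Multiset TreeClass)) ↔
    ((clT s = T₁ ∧ clT s' = T₂ ∧ c = [.full, zc1 s']) ∨
     (clT s' = T₁ ∧ clT s = T₂ ∧ c = [zc1 s, .full])) := by
  obtain ⟨l⟩ := s
  obtain ⟨l'⟩ := s'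
  constructor
  · rintro ⟨hP, hR⟩
    obtain ⟨h1, h2, -⟩ := cut_facts _ _ hc
    have hPlen : (Pcut [RTree.node l, RTree.node l'] c).length = 1 := by
      have := congrArg Multiset.card hP
      rwa [card_clF, Multiset.card_singleton] at this
    have hRlen : (Rcut [RTree.node l, RTree.node l'] c).length = 1 := by
      have := congrArg Multiset.card hR
      rwa [card_clF, Multiset.card_singleton] at this
    have hfulls : fullsL c = 1 := by omega
    have htf : tfL c = 1 := by
      have := tfL_le_fullsL c
      simp only [List.length_cons, List.length_nil] at h2
      omega
    rcases mem_cutsF_cons.1 hc with ⟨cs, hcs, rfl⟩ | ⟨ds, hds, cs, hcs, rfl⟩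
    · -- c = full :: cs
      have h0 : fullsL cs = 0 := by
        rw [fullsL] at hfulls; omega
      have hcz : cs = zcF [RTree.node l'] := eq_zcF _ cs hcs h0
      subst hcz
      have hcomp : Pcut [RTree.node l, RTree.node l'] (.full :: zcF [RTree.node l'])
          = [RTree.node l] ∧
          Rcut [RTree.node l, RTree.node l'] (.full :: zcF [RTree.node l'])
          = [RTree.node l'] := by
        rw [Pcut, Rcut, (Rcut_zcF _).1, (Rcut_zcF _).2]
        exact ⟨rfl, rfl⟩
      rw [hcomp.1, clF_single] at hP
      rw [hcomp.2, clF_single] at hR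
      refine .inl ⟨Multiset.singleton_inj.1 hP, Multiset.singleton_inj.1 hR, ?_⟩
      rw [zcF_cons]
      simp [zcF]
    · -- c = branch ds :: cs
      obtain ⟨c₂, rfl⟩ := cutsF_single_mem hcs
      have hc₂ : c₂ = CutShape.full := by
        cases c₂ with
        | full => rfl
        | branch es =>
          rw [tfL, tfL, tfL] at htf
          exact absurd htf (by omega)
      subst hc₂
      have h0 : fullsL ds = 0 := by
        rw [fullsL, fullsL, fullsL] at hfulls
        omega
      have hdz : ds = zcF l := eq_zcF _ ds hds h0
      subst hdz
      have hcomp : Pcut [RTree.node l, RTree.node l'] (.branch (zcF l) :: [.full])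
          = [RTree.node l'] ∧
          Rcut [RTree.node l, RTree.node l'] (.branch (zcF l) :: [.full])
          = [RTree.node l] := by
        constructor
        · rw [Pcut, (Rcut_zcF l).2, (Pcut_full l').1]
          rfl
        · rw [Rcut, (Rcut_zcF l).1, (Pcut_full l').2]
      rw [hcomp.1, clF_single] at hP
      rw [hcomp.2, clF_single] at hR
      exact .inr ⟨Multiset.singleton_inj.1 hP, Multiset.singleton_inj.1 hR, by simp [zc1]⟩
  · rintro (⟨h1, h2, rfl⟩ | ⟨h1, h2, rfl⟩)
    · have hcomp : Pcut [RTree.node l, RTree.node l'] [.full, zc1 (RTree.node l')]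
          = [RTree.node l] ∧
          Rcut [RTree.node l, RTree.node l'] [.full, zc1 (RTree.node l')]
          = [RTree.node l'] := by
        have : [CutShape.full, zc1 (RTree.node l')] = .full :: zcF [RTree.node l'] := by
          rw [zcF_cons]; simp [zcF]
        rw [this, Pcut, Rcut, (Rcut_zcF _).1, (Rcut_zcF _).2]
        exact ⟨rfl, rfl⟩
      rw [hcomp.1, hcomp.2, clF_single, clF_single, h1, h2]
      exact ⟨rfl, rfl⟩
    · have hcomp : Pcut [RTree.node l, RTree.node l'] [zc1 (RTree.node l), .full]
          = [RTree.node l'] ∧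
          Rcut [RTree.node l, RTree.node l'] [zc1 (RTree.node l), .full]
          = [RTree.node l] := by
        constructor
        · rw [zc1, Pcut, (Rcut_zcF l).2, (Pcut_full l').1]
          rfl
        · rw [zc1, Rcut, (Rcut_zcF l).1, (Pcut_full l').2]
      rw [hcomp.1, hcomp.2, clF_single, clF_single, h1, h2]
      exact ⟨rfl, rfl⟩
lemma x_mem_cutsF (s s' : RTree) : [CutShape.full, zc1 s'] ∈ cutsF [s, s'] := by
  obtain ⟨l⟩ := s
  refine mem_cutsF_cons.2 (.inl ⟨[zc1 s'], ?_, rfl⟩)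
  have := zcF_mem [s']
  rwa [zcF_cons, show zcF ([] : List RTree) = [] from by simp [zcF]] at this

lemma y_mem_cutsF (s s' : RTree) : [zc1 s, CutShape.full] ∈ cutsF [s, s'] := by
  obtain ⟨l⟩ := s
  obtain ⟨l'⟩ := s'
  refine mem_cutsF_cons.2 (.inr ⟨zcF l, zcF_mem l, [CutShape.full], ?_, by simp [zc1]⟩)
  exact mem_cutsF_cons.2 (.inl ⟨[], by simp [cutsF], rfl⟩)

lemma x_ne_y (s s' : RTree) : [CutShape.full, zc1 s'] ≠ [zc1 s, CutShape.full] := by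
  obtain ⟨l⟩ := s
  intro h
  rw [zc1] at h
  injection h with h1 _
  exact CutShape.noConfusion h1

lemma countP_pair (s s' : RTree) (T₁ T₂ : TreeClass) :
    ((cutsF [s, s']).countP fun c =>
        decide (clF (Pcut [s, s'] c) = ({T₁} : Multiset TreeClass) ∧
          clF (Rcut [s, s'] c) = ({T₂} : Multiset TreeClass)))
      = (if clT s = T₁ ∧ clT s' = T₂ then 1 else 0)
        + (if clT s' = T₁ ∧ clT s = T₂ then 1 else 0) := by
  by_cases h1 : clT s = T₁ ∧ clT s' = T₂
  · by_cases h2 : clT s' = T₁ ∧ clT s = T₂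
    · rw [if_pos h1, if_pos h2]
      apply countP_eq_two_aux (cutsF_nodup _) (x_mem_cutsF s s') (y_mem_cutsF s s') (x_ne_y s s')
      intro c hc
      rw [decide_eq_true_eq, pred_pair hc]
      constructor
      · rintro (⟨-, -, rfl⟩ | ⟨-, -, rfl⟩)
        · exact .inl rfl
        · exact .inr rfl
      · rintro (rfl | rfl)
        · exact .inl ⟨h1.1, h1.2, rfl⟩
        · exact .inr ⟨h2.1, h2.2, rfl⟩
    · rw [if_pos h1, if_neg h2]
      apply countP_eq_one_aux (cutsF_nodup _) (x_mem_cutsF s s')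
      intro c hc
      rw [decide_eq_true_eq, pred_pair hc]
      constructor
      · rintro (⟨-, -, rfl⟩ | ⟨g1, g2, rfl⟩)
        · rfl
        · exact absurd ⟨g1, g2⟩ h2
      · rintro rfl
        exact .inl ⟨h1.1, h1.2, rfl⟩
  · by_cases h2 : clT s' = T₁ ∧ clT s = T₂
    · rw [if_neg h1, if_pos h2]
      apply countP_eq_one_aux (cutsF_nodup _) (y_mem_cutsF s s')
      intro c hc
      rw [decide_eq_true_eq, pred_pair hc]
      constructor
      · rintro (⟨g1, g2, rfl⟩ | ⟨-, -, rfl⟩)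
        · exact absurd ⟨g1, g2⟩ h1
        · rfl
      · rintro rfl
        exact .inr ⟨h2.1, h2.2, rfl⟩
    · rw [if_neg h1, if_neg h2]
      rw [List.countP_eq_zero]
      intro c hc
      rw [decide_eq_true_eq, pred_pair hc]
      rintro (⟨g1, g2, -⟩ | ⟨g1, g2, -⟩)
      · exact h1 ⟨g1, g2⟩
      · exact h2 ⟨g1, g2⟩

/-! ### nCuts computations -/

lemma nCuts_singleton (T₁ T₂ T : TreeClass) :
    nCuts {T₁} {T₂} {T} = aCount T₁ T₂ T := by
  unfold nCuts aCount
  rw [repF_singleton]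
  apply List.countP_congr
  intro c hc
  simp only [decide_eq_true_eq]
  constructor
  · rintro ⟨hP, hR⟩
    refine ⟨?_, hP, hR⟩
    have h1 := (cut_facts _ c hc).1
    have hcard : (Pcut [repT T] c).length = 1 := by
      have := congrArg Multiset.card hP
      rwa [card_clF, Multiset.card_singleton] at this
    omega
  · rintro ⟨-, hP, hR⟩
    exact ⟨hP, hR⟩

lemma nCuts_exists {A B M : ForestClass} (h : nCuts A B M ≠ 0) :
    ∃ c ∈ cutsF (repF M), clF (Pcut (repF M) c) = A ∧ clF (Rcut (repF M) c) = B := by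
  unfold nCuts at h
  obtain ⟨c, hc, hp⟩ := List.countP_pos_iff.1 (Nat.pos_of_ne_zero h)
  rw [decide_eq_true_eq] at hp
  exact ⟨c, hc, hp⟩

lemma nCuts_size {A B M : ForestClass} (h : nCuts A B M ≠ 0) :
    sizeC M = sizeC A + sizeC B := by
  obtain ⟨c, hc, hP, hR⟩ := nCuts_exists h
  have h3 := (cut_facts _ c hc).2.2
  calc sizeC M = sizeL (repF M) := rfl
    _ = sizeL (Pcut (repF M) c) + sizeL (Rcut (repF M) c) := h3.symm
    _ = sizeC (clF (Pcut (repF M) c)) + sizeC (clF (Rcut (repF M) c)) := by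
        rw [sizeC_clF, sizeC_clF]
    _ = sizeC A + sizeC B := by rw [hP, hR]

lemma aCount_size {T₁ T₂ T : TreeClass} (h : aCount T₁ T₂ T ≠ 0) :
    sizeT T = sizeT T₁ + sizeT T₂ := by
  rw [← nCuts_singleton] at h
  have := nCuts_size h
  rwa [sizeC_singleton, sizeC_singleton, sizeC_singleton] at this

lemma pair_eq_pair {a b c d : TreeClass}
    (h : ({a} : Multiset TreeClass) + {b} = {c} + {d}) :
    (a = c ∧ b = d) ∨ (a = d ∧ b = c) := by
  rw [Multiset.singleton_add, Multiset.singleton_add, Multiset.cons_eq_cons] at h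
  rcases h with ⟨h1, h2⟩ | ⟨-, cs, h1, h2⟩
  · exact .inl ⟨h1, Multiset.singleton_inj.1 h2⟩
  · have hcs : cs = 0 := by
      have := congrArg Multiset.card h1
      simp at this
      exact this
    subst hcs
    simp only [Multiset.cons_zero] at h1 h2
    exact .inr ⟨Multiset.singleton_inj.1 h2.symm, Multiset.singleton_inj.1 h1⟩

lemma nCuts_card {T₁ T₂ : TreeClass} {M : ForestClass}
    (h : nCuts {T₁} {T₂} M ≠ 0) :
    (∃ T, M = ({T} : Multiset TreeClass)) ∨ M = ({T₁} : Multiset TreeClass) + {T₂} := by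
  obtain ⟨c, hc, hP, hR⟩ := nCuts_exists h
  obtain ⟨h1, h2, -⟩ := cut_facts _ _ hc
  have hPlen : (Pcut (repF M) c).length = 1 := by
    have := congrArg Multiset.card hP
    rwa [card_clF, Multiset.card_singleton] at this
  have hRlen : (Rcut (repF M) c).length = 1 := by
    have := congrArg Multiset.card hR
    rwa [card_clF, Multiset.card_singleton] at this
  have htf := tfL_le_fullsL c
  have hlen : (repF M).length = 1 ∨ (repF M).length = 2 := by omega
  rcases hlen with hl | hl
  · left
    have : Multiset.card M = 1 := by rw [← length_repF, hl]
    exact Multiset.card_eq_one.1 this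
  · right
    obtain ⟨s, s', hss⟩ := List.length_eq_two.1 hl
    rw [hss] at hc hP hR
    have := (pred_pair hc).1 ⟨hP, hR⟩
    have hM : M = clF [s, s'] := by rw [← hss, clF_repF]
    rcases this with ⟨g1, g2, -⟩ | ⟨g1, g2, -⟩
    · rw [hM, clF_pair, g1, g2]
    · rw [hM, clF_pair, g1, g2]
      exact add_comm _ _

lemma nCuts_pair_val (T₁ T₂ : TreeClass) :
    nCuts {T₁} {T₂} ({T₁} + {T₂} : Multiset TreeClass)
      = if T₁ = T₂ then 2 else 1 := by
  set M : ForestClass := ({T₁} : Multiset TreeClass) + {T₂} with hMdef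
  have hl : (repF M).length = 2 := by
    rw [length_repF]
    simp [hMdef]
  obtain ⟨s, s', hss⟩ := List.length_eq_two.1 hl
  have hM : ({clT s} : Multiset TreeClass) + {clT s'} = {T₁} + {T₂} := by
    rw [← clF_pair, ← hss, clF_repF]
  unfold nCuts
  rw [hss, countP_pair]
  rcases pair_eq_pair hM with ⟨g1, g2⟩ | ⟨g1, g2⟩
  · by_cases he : T₁ = T₂
    · subst he
      rw [if_pos ⟨g1, g2⟩, if_pos ⟨g2, g1⟩, if_pos rfl]
    · rw [if_pos ⟨g1, g2⟩, if_neg (fun h' => he (h'.1.symm.trans g2)), if_neg he]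
  · by_cases he : T₁ = T₂
    · subst he
      rw [if_pos ⟨g1, g2⟩, if_pos ⟨g2, g1⟩, if_pos rfl]
    · rw [if_neg (fun h' => he (h'.1.symm.trans g1)), if_pos ⟨g2, g1⟩, if_neg he]
lemma hmul_delta_delta (A B : ForestClass) :
    hmul (delta A) (delta B) = mulBasis A B := by
  unfold hmul delta
  rw [Finsupp.sum_single_index (by simp)]
  rw [Finsupp.sum_single_index (by simp)]
  simp

lemma mulBasis_trees (T₁ T₂ : TreeClass) :
    mulBasis {T₁} {T₂}
      = (∑ T ∈ treeCand (sizeT T₁ + sizeT T₂),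
          (aCount T₁ T₂ T : ℚ) • delta ({T} : Multiset TreeClass))
        + (nCuts {T₁} {T₂} ({T₁} + {T₂}) : ℚ) • delta (({T₁} : Multiset TreeClass) + {T₂}) := by
  classical
  set n := sizeT T₁ + sizeT T₂ with hn
  set P : ForestClass := ({T₁} : Multiset TreeClass) + {T₂} with hP
  set f : ForestClass → H := fun M => (nCuts {T₁} {T₂} M : ℚ) • delta M with hf
  set I : Finset ForestClass := (treeCand n).image (fun T => ({T} : ForestClass)) with hI
  set U : Finset ForestClass := insert P (forestCand n ∪ I) with hU
  have hsz : sizeC ({T₁} : ForestClass) + sizeC ({T₂} : ForestClass) = n := by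
    rw [sizeC_singleton, sizeC_singleton]
  have key : ∀ M, nCuts {T₁} {T₂} M ≠ 0 →
      sizeC M = n ∧ ((∃ T, M = ({T} : ForestClass) ∧ T ∈ treeCand n) ∨ M = P) := by
    intro M hM
    have hs : sizeC M = n := by rw [nCuts_size hM, hsz]
    refine ⟨hs, ?_⟩
    rcases nCuts_card hM with ⟨T, rfl⟩ | rfl
    · left
      refine ⟨T, rfl, mem_treeCand ?_⟩
      have : sizeC ({T} : ForestClass) = n := hs
      rw [sizeC_singleton] at this
      omega
    · right; rfl
  have h1 : mulBasis {T₁} {T₂} = ∑ M ∈ U, f M := by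
    unfold mulBasis
    rw [hsz]
    apply Finset.sum_subset
    · intro M hM
      exact Finset.mem_insert_of_mem (Finset.mem_union_left _ hM)
    · intro M _ hM
      by_contra hne
      have h0 : nCuts {T₁} {T₂} M ≠ 0 := by
        intro h0; exact hne (by simp [hf, h0])
      exact hM (mem_forestCand (le_of_eq (key M h0).1))
  have hPU : P ∈ U := Finset.mem_insert_self _ _
  have hPI : P ∉ I := by
    intro h
    obtain ⟨T, _, hT⟩ := Finset.mem_image.1 h
    have := congrArg Multiset.card hT
    simp [hP] at this
  have h2 : ∑ M ∈ U, f M = f P + ∑ M ∈ U.erase P, f M :=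
    (Finset.add_sum_erase U f hPU).symm
  have h3 : ∑ M ∈ U.erase P, f M = ∑ M ∈ I, f M := by
    symm
    apply Finset.sum_subset
    · intro M hM
      exact Finset.mem_erase.2
        ⟨fun h => hPI (h ▸ hM), Finset.mem_insert_of_mem (Finset.mem_union_right _ hM)⟩
    · intro M hM hMI
      by_contra hne
      have h0 : nCuts {T₁} {T₂} M ≠ 0 := by
        intro h0; exact hne (by simp [hf, h0])
      rcases (key M h0).2 with ⟨T, rfl, hT⟩ | rfl
      · exact hMI (Finset.mem_image_of_mem _ hT)
      · exact (Finset.mem_erase.1 hM).1 rfl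
  have h4 : ∑ M ∈ I, f M
      = ∑ T ∈ treeCand n, (aCount T₁ T₂ T : ℚ) • delta ({T} : Multiset TreeClass) := by
    rw [hI, Finset.sum_image (fun x _ y _ h => Multiset.singleton_inj.1 h)]
    refine Finset.sum_congr rfl fun T _ => ?_
    rw [hf]
    simp only
    rw [nCuts_singleton]
  rw [h1, h2, h3, h4, hf]
  simp only
  rw [add_comm]
lemma key_product (T₁ T₂ : TreeClass) :
    hmul (delta {T₁}) (delta {T₂})
      = (∑ T ∈ treeCand (sizeT T₁ + sizeT T₂),
          (aCount T₁ T₂ T : ℚ) • delta ({T} : Multiset TreeClass))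
        + (((if T₁ = T₂ then 2 else 1 : ℕ)) : ℚ) • delta (({T₁} : Multiset TreeClass) + {T₂}) := by
  rw [hmul_delta_delta, mulBasis_trees, nCuts_pair_val]
/-- For rooted trees `T₁ ≇ T₂`,
`δ_{T₁} × δ_{T₂} = Σ_T a(T₁,T₂;T)·δ_T + δ_{T₁⊔T₂}`, while
`δ_{T₁} × δ_{T₁} = Σ_T a(T₁,T₁;T)·δ_T + 2·δ_{T₁⊔T₁}` (the sums over
isomorphism classes of rooted trees `T`; they are supported on trees with
`|T₁| + |T₂|` vertices, hence captured by the finite candidate set).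
Consequently
`δ_{T₁} × δ_{T₂} − δ_{T₂} × δ_{T₁} = Σ_T (a(T₁,T₂;T) − a(T₂,T₁;T))·δ_T`. -/
theorem hall_product_of_trees :
    (∀ T₁ T₂ : TreeClass, T₁ ≠ T₂ →
      hmul (delta {T₁}) (delta {T₂})
        = (∑ T ∈ treeCand (sizeT T₁ + sizeT T₂),
            (aCount T₁ T₂ T : ℚ) • delta ({T} : Multiset TreeClass))
          + delta (({T₁} : Multiset TreeClass) + {T₂})) ∧
    (∀ T₁ : TreeClass,
      hmul (delta {T₁}) (delta {T₁})
        = (∑ T ∈ treeCand (sizeT T₁ + sizeT T₁),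
            (aCount T₁ T₁ T : ℚ) • delta ({T} : Multiset TreeClass))
          + (2 : ℚ) • delta (({T₁} : Multiset TreeClass) + {T₁})) ∧
    (∀ T₁ T₂ : TreeClass,
      hmul (delta {T₁}) (delta {T₂}) - hmul (delta {T₂}) (delta {T₁})
        = ∑ T ∈ treeCand (sizeT T₁ + sizeT T₂),
            ((aCount T₁ T₂ T : ℚ) - (aCount T₂ T₁ T : ℚ))
              • delta ({T} : Multiset TreeClass)) := by
  refine ⟨?_, ?_, ?_⟩
  · intro T₁ T₂ h
    rw [key_product T₁ T₂, if_neg h, Nat.cast_one, one_smul]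
  · intro T₁
    rw [key_product T₁ T₁, if_pos rfl]
    norm_num
  · intro T₁ T₂
    rcases eq_or_ne T₁ T₂ with rfl | h
    · rw [key_product T₁ T₁, sub_self]
      symm
      refine Finset.sum_eq_zero fun T _ => ?_
      rw [sub_self, zero_smul]
    · rw [key_product T₁ T₂, key_product T₂ T₁, if_neg h, if_neg h.symm,
        Nat.add_comm (sizeT T₂) (sizeT T₁),
        show ({T₂} : Multiset TreeClass) + {T₁} = {T₁} + {T₂} from add_comm _ _,
        Nat.cast_one, one_smul,
        show ∀ a b c : H, (a + c) - (b + c) = a - b from fun a b c => by abel,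
        ← Finset.sum_sub_distrib]
      exact Finset.sum_congr rfl fun T _ => (sub_smul _ _ _).symm

end CK
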